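/- Let $1<q<\infty$ and let $(u_n)$ be a bounded sequence in $L^q(\mathbb{R}^d)$ with $u_n(x) \to u_\infty(x)$ for almost every $x$, where $u_\infty \in L^q(\mathbb{R}^d)$. Then $\lim_{n\to\infty} \int_{\mathbb{R}^d} \big| |u_n|^q - |u_n - u_\infty|^q - |u_\infty|^q \big|\,dx = 0$. -/

import Mathlib

open MeasureTheory Filter

lemma bl_rpow_sub_le {q : ℝ} (hq : 1 ≤ q) {x y : ℝ} (hy : 0 ≤ y) (hxy : y ≤ x) :
    x ^ q - y ^ q ≤ q * x ^ (q - 1) * (x - y) := by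
  have hx : 0 ≤ x := hy.trans hxy
  rcases hx.eq_or_lt with h0 | hxpos
  · have hy0 : y = 0 := le_antisymm (hxy.trans h0.symm.le) hy
    simp [← h0, hy0, Real.zero_rpow (by positivity : q ≠ 0)]
  · have hs : -1 ≤ y / x - 1 := by
      have : 0 ≤ y / x := div_nonneg hy hxpos.le
      linarith
    have hB := one_add_mul_self_le_rpow_one_add hs hq
    rw [show (1 : ℝ) + (y / x - 1) = y / x by ring] at hB
    have hdiv : (y / x) ^ q = y ^ q / x ^ q := Real.div_rpow hy hxpos.le q
    have hxq : (0:ℝ) < x ^ q := Real.rpow_pos_of_pos hxpos q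
    have hx1 : x ^ (q - 1) * x = x ^ q := by
      rw [← Real.rpow_add_one hxpos.ne' (q - 1)]
      norm_num
    rw [hdiv] at hB
    have h1 : (1 + q * (y / x - 1)) * x ^ q ≤ (y ^ q / x ^ q) * x ^ q :=
      mul_le_mul_of_nonneg_right hB hxq.le
    have h2 : (y ^ q / x ^ q) * x ^ q = y ^ q := div_mul_cancel₀ _ hxq.ne'
    have h3 : (y / x) * x ^ q = y * x ^ (q - 1) := by
      rw [← hx1]; field_simp
    nlinarith [h1, h2, h3]

lemma bl_abs_rpow_sub {q : ℝ} (hq : 1 ≤ q) {x y : ℝ} (hx : 0 ≤ x) (hy : 0 ≤ y) :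
    |x ^ q - y ^ q| ≤ q * (x + y) ^ (q - 1) * |x - y| := by
  wlog hxy : y ≤ x generalizing x y
  · have h := this hy hx (le_of_not_ge hxy)
    rw [abs_sub_comm, abs_sub_comm y x, add_comm] at h
    exact h
  have h := bl_rpow_sub_le hq hy hxy
  have hmono : x ^ (q - 1) ≤ (x + y) ^ (q - 1) :=
    Real.rpow_le_rpow hx (le_add_of_nonneg_right hy) (by linarith)
  rw [abs_of_nonneg (sub_nonneg.2 (Real.rpow_le_rpow hy hxy (by linarith))),
    abs_of_nonneg (sub_nonneg.2 hxy)]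
  calc x ^ q - y ^ q ≤ q * x ^ (q - 1) * (x - y) := h
    _ ≤ q * (x + y) ^ (q - 1) * (x - y) := by
        apply mul_le_mul_of_nonneg_right
          (mul_le_mul_of_nonneg_left hmono (by linarith)) (by linarith)

lemma bl_key {q : ℝ} (hq : 1 < q) {ε : ℝ} (hε : 0 < ε) :
    ∃ C : ℝ, 0 ≤ C ∧ ∀ a b : ℂ, |‖a + b‖ ^ q - ‖a‖ ^ q| ≤ ε * ‖a‖ ^ q + C * ‖b‖ ^ q := by
  set K : ℝ := max 1 (q * 3 ^ (q - 1) / ε) with hKdef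
  have hK1 : 1 ≤ K := le_max_left _ _
  have hK0 : 0 < K := by linarith
  refine ⟨(K + 1) ^ q + K ^ q, by positivity, fun a b => ?_⟩
  have hq0 : (0:ℝ) < q := by linarith
  rcases le_or_gt ‖a‖ (K * ‖b‖) with hcase | hcase
  · have h1 : ‖a + b‖ ^ q ≤ ((K + 1) * ‖b‖) ^ q := by
      apply Real.rpow_le_rpow (norm_nonneg _) _ hq0.le
      calc ‖a + b‖ ≤ ‖a‖ + ‖b‖ := norm_add_le _ _
        _ ≤ K * ‖b‖ + ‖b‖ := by linarith
        _ = (K + 1) * ‖b‖ := by ring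
    have h2 : ‖a‖ ^ q ≤ (K * ‖b‖) ^ q :=
      Real.rpow_le_rpow (norm_nonneg _) hcase hq0.le
    rw [Real.mul_rpow (by positivity) (norm_nonneg _)] at h1
    rw [Real.mul_rpow (by positivity) (norm_nonneg _)] at h2
    have habs : |‖a + b‖ ^ q - ‖a‖ ^ q| ≤ ‖a + b‖ ^ q + ‖a‖ ^ q := by
      rw [abs_sub_le_iff]
      constructor <;> nlinarith [Real.rpow_nonneg (norm_nonneg (a+b)) q,
        Real.rpow_nonneg (norm_nonneg a) q]
    have hε' : 0 ≤ ε * ‖a‖ ^ q := by positivity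
    nlinarith [habs, h1, h2]
  · have ha0 : 0 < ‖a‖ := lt_of_le_of_lt (by positivity) hcase
    have h := bl_abs_rpow_sub hq.le (norm_nonneg (a + b)) (norm_nonneg a)
    have h2 : |‖a + b‖ - ‖a‖| ≤ ‖b‖ := by
      have := abs_norm_sub_norm_le (a + b) a
      rwa [add_sub_cancel_left] at this
    have hbK : ‖b‖ ≤ ‖a‖ / K := by
      rw [le_div_iff₀ hK0]; nlinarith
    have hba : ‖b‖ ≤ ‖a‖ := by
      calc ‖b‖ ≤ ‖a‖ / K := hbK
        _ ≤ ‖a‖ / 1 := by apply div_le_div_of_nonneg_left ha0.le zero_lt_one hK1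
        _ = ‖a‖ := div_one _
    have h3 : ‖a + b‖ + ‖a‖ ≤ 3 * ‖a‖ := by
      have := norm_add_le a b; linarith
    have h4 : (‖a + b‖ + ‖a‖) ^ (q - 1) ≤ 3 ^ (q - 1) * ‖a‖ ^ (q - 1) := by
      rw [← Real.mul_rpow (by norm_num) ha0.le]
      exact Real.rpow_le_rpow (by positivity) h3 (by linarith)
    have haq : ‖a‖ ^ (q - 1) * ‖a‖ = ‖a‖ ^ q := by
      rw [← Real.rpow_add_one ha0.ne' (q - 1)]; norm_num
    have hKε : q * 3 ^ (q - 1) / K ≤ ε := by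
      rw [div_le_iff₀ hK0]
      have hle : q * 3 ^ (q - 1) / ε ≤ K := le_max_right _ _
      calc q * 3 ^ (q - 1) = (q * 3 ^ (q - 1) / ε) * ε := by field_simp
        _ ≤ K * ε := mul_le_mul_of_nonneg_right hle hε.le
        _ = ε * K := mul_comm _ _
    have hstep : |‖a + b‖ ^ q - ‖a‖ ^ q| ≤ ε * ‖a‖ ^ q := by
      calc |‖a + b‖ ^ q - ‖a‖ ^ q|
          ≤ q * (‖a + b‖ + ‖a‖) ^ (q - 1) * |‖a + b‖ - ‖a‖| := h
        _ ≤ q * (3 ^ (q - 1) * ‖a‖ ^ (q - 1)) * (‖a‖ / K) := by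
            apply mul_le_mul (mul_le_mul_of_nonneg_left h4 hq0.le)
              (h2.trans hbK) (abs_nonneg _) (by positivity)
        _ = (q * 3 ^ (q - 1) / K) * (‖a‖ ^ (q - 1) * ‖a‖) := by ring
        _ = (q * 3 ^ (q - 1) / K) * ‖a‖ ^ q := by rw [haq]
        _ ≤ ε * ‖a‖ ^ q := mul_le_mul_of_nonneg_right hKε (by positivity)
    have : (0:ℝ) ≤ ((K + 1) ^ q + K ^ q) * ‖b‖ ^ q := by positivity
    linarith

/-- the Brezis–Lieb lemma. -/
theorem brezis_lieb (d : ℕ) (q : ℝ) (hq : 1 < q)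
    (u : ℕ → (Fin d → ℝ) → ℂ) (uinf : (Fin d → ℝ) → ℂ)
    (hmem : ∀ n, MemLp (u n) (ENNReal.ofReal q) volume)
    (hbdd : ∃ C : ℝ, ∀ n, (eLpNorm (u n) (ENNReal.ofReal q) volume).toReal ≤ C)
    (hae : ∀ᵐ x ∂(volume : Measure (Fin d → ℝ)),
      Tendsto (fun n => u n x) atTop (nhds (uinf x)))
    (hinf : MemLp uinf (ENNReal.ofReal q) volume) :
    Tendsto
      (fun n => ∫ x : Fin d → ℝ,
        |‖u n x‖ ^ q - ‖u n x - uinf x‖ ^ q - ‖uinf x‖ ^ q|)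
      atTop (nhds 0) := by
  have hq0 : (0:ℝ) < q := by linarith
  set p : ENNReal := ENNReal.ofReal q with hpdef
  have hp0 : p ≠ 0 := (ENNReal.ofReal_pos.2 hq0).ne'
  have hptop : p ≠ ⊤ := ENNReal.ofReal_ne_top
  have hpreal : p.toReal = q := ENNReal.toReal_ofReal hq0.le
  have hp1 : 1 ≤ p := by
    rw [hpdef, ← ENNReal.ofReal_one]
    exact ENNReal.ofReal_le_ofReal hq.le
  -- membership of differences
  have hFmem : ∀ n, MemLp (fun x => u n x - uinf x) p volume := fun n =>
    (hmem n).sub hinf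
  -- integrability of the q-th powers
  have hI1 : ∀ n, Integrable (fun x => ‖u n x‖ ^ q) volume := by
    intro n
    have := (hmem n).integrable_norm_rpow hp0 hptop
    rwa [hpreal] at this
  have hI2 : ∀ n, Integrable (fun x => ‖u n x - uinf x‖ ^ q) volume := by
    intro n
    have := (hFmem n).integrable_norm_rpow hp0 hptop
    rwa [hpreal] at this
  have hI3 : Integrable (fun x => ‖uinf x‖ ^ q) volume := by
    have := hinf.integrable_norm_rpow hp0 hptop
    rwa [hpreal] at this
  have hg_int : ∀ n, Integrable
      (fun x => |‖u n x‖ ^ q - ‖u n x - uinf x‖ ^ q - ‖uinf x‖ ^ q|) volume :=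
    fun n => (((hI1 n).sub (hI2 n)).sub hI3).abs
  -- uniform bound on ∫ ‖u n - uinf‖^q
  obtain ⟨C0, hC0⟩ := hbdd
  set C1 : ℝ := max C0 0 with hC1def
  have hC1 : 0 ≤ C1 := le_max_right _ _
  set B : ℝ := (eLpNorm uinf p volume).toReal with hBdef
  have hB : 0 ≤ B := ENNReal.toReal_nonneg
  set M : ℝ := (C1 + B) ^ q with hMdef
  have hM0 : 0 ≤ M := Real.rpow_nonneg (by linarith) q
  have hM : ∀ n, (∫ x, ‖u n x - uinf x‖ ^ q) ≤ M := by
    intro n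
    have hint_nonneg : 0 ≤ ∫ x, ‖u n x - uinf x‖ ^ q :=
      integral_nonneg fun x => Real.rpow_nonneg (norm_nonneg _) q
    have hs := (hFmem n).eLpNorm_eq_integral_rpow_norm hp0 hptop
    rw [hpreal] at hs
    have ht : (eLpNorm (fun x => u n x - uinf x) p volume).toReal
        = (∫ x, ‖u n x - uinf x‖ ^ q) ^ q⁻¹ := by
      rw [hs, ENNReal.toReal_ofReal (Real.rpow_nonneg hint_nonneg _)]
    have hval : (∫ x, ‖u n x - uinf x‖ ^ q)
        = ((eLpNorm (fun x => u n x - uinf x) p volume).toReal) ^ q := by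
      rw [ht, ← Real.rpow_mul hint_nonneg, inv_mul_cancel₀ hq0.ne', Real.rpow_one]
    have hle : (eLpNorm (fun x => u n x - uinf x) p volume).toReal ≤ C1 + B := by
      have htri : eLpNorm (fun x => u n x - uinf x) p volume
          ≤ eLpNorm (u n) p volume + eLpNorm uinf p volume :=
        eLpNorm_sub_le (hmem n).1 hinf.1 hp1
      have hfin1 : eLpNorm (u n) p volume ≠ ⊤ := (hmem n).eLpNorm_ne_top
      have hfin2 : eLpNorm uinf p volume ≠ ⊤ := hinf.eLpNorm_ne_top
      calc (eLpNorm (fun x => u n x - uinf x) p volume).toReal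
          ≤ (eLpNorm (u n) p volume + eLpNorm uinf p volume).toReal :=
            ENNReal.toReal_mono (by finiteness) htri
        _ = (eLpNorm (u n) p volume).toReal + B :=
            ENNReal.toReal_add hfin1 hfin2
        _ ≤ C1 + B := by
            have := hC0 n; have := le_max_left C0 0; linarith
    rw [hval, hMdef]
    exact Real.rpow_le_rpow ENNReal.toReal_nonneg hle hq0.le
  -- main argument
  rw [Metric.tendsto_atTop]
  intro δ hδ
  set ε : ℝ := δ / (2 * (M + 1)) with hεdef
  have hε : 0 < ε := by
    apply div_pos hδ; nlinarith
  obtain ⟨C, hC, hkey⟩ := bl_key hq hε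
  -- pointwise estimate
  have hpt : ∀ n x, |‖u n x‖ ^ q - ‖u n x - uinf x‖ ^ q - ‖uinf x‖ ^ q|
      ≤ ε * ‖u n x - uinf x‖ ^ q + (C + 1) * ‖uinf x‖ ^ q := by
    intro n x
    have h := hkey (u n x - uinf x) (uinf x)
    rw [sub_add_cancel] at h
    have h2 : |‖u n x‖ ^ q - ‖u n x - uinf x‖ ^ q - ‖uinf x‖ ^ q|
        ≤ |‖u n x‖ ^ q - ‖u n x - uinf x‖ ^ q| + ‖uinf x‖ ^ q := by
      have h3 := abs_sub (‖u n x‖ ^ q - ‖u n x - uinf x‖ ^ q) (‖uinf x‖ ^ q)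
      rwa [abs_of_nonneg (Real.rpow_nonneg (norm_nonneg _) q)] at h3
    linarith
  -- the auxiliary sequence W
  set W : ℕ → (Fin d → ℝ) → ℝ := fun n x =>
    max (|‖u n x‖ ^ q - ‖u n x - uinf x‖ ^ q - ‖uinf x‖ ^ q|
      - ε * ‖u n x - uinf x‖ ^ q) 0 with hWdef
  have hW_nonneg : ∀ n x, 0 ≤ W n x := fun n x => le_max_right _ _
  have hW_le : ∀ n x, W n x ≤ (C + 1) * ‖uinf x‖ ^ q := by
    intro n x
    apply max_le _ (by positivity)
    have := hpt n x; linarith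
  have hWm : ∀ n, AEStronglyMeasurable (W n) volume := by
    intro n
    have h1 := (hg_int n).aestronglyMeasurable
    have h2 := ((hI2 n).const_mul ε).aestronglyMeasurable
    exact ((h1.sub h2).aemeasurable.max aemeasurable_const).aestronglyMeasurable
  have hbound_int : Integrable (fun x => (C + 1) * ‖uinf x‖ ^ q) volume :=
    hI3.const_mul _
  have hW_int : ∀ n, Integrable (W n) volume := by
    intro n
    apply hbound_int.mono' (hWm n)
    filter_upwards with x
    rw [Real.norm_eq_abs, abs_of_nonneg (hW_nonneg n x)]
    exact hW_le n x
  -- W n → 0 in L¹ by dominated convergence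
  have hWtendsto : Tendsto (fun n => ∫ x, W n x) atTop (nhds 0) := by
    have hdc := tendsto_integral_of_dominated_convergence
      (μ := (volume : Measure (Fin d → ℝ)))
      (F := W) (f := fun _ => (0:ℝ))
      (fun x => (C + 1) * ‖uinf x‖ ^ q) hWm hbound_int
      (fun n => by
        filter_upwards with x
        rw [Real.norm_eq_abs, abs_of_nonneg (hW_nonneg n x)]
        exact hW_le n x)
      (by
        filter_upwards [hae] with x hx
        have hrpow : ContinuousAt (fun t : ℝ => t ^ q) ‖uinf x‖ :=
          Real.continuousAt_rpow_const _ q (Or.inr hq0.le)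
        have hn1 : Tendsto (fun n => ‖u n x‖ ^ q) atTop (nhds (‖uinf x‖ ^ q)) :=
          hrpow.tendsto.comp hx.norm
        have hx2 : Tendsto (fun n => u n x - uinf x) atTop (nhds 0) := by
          have := hx.sub (tendsto_const_nhds (x := uinf x))
          simpa using this
        have hrpow0 : ContinuousAt (fun t : ℝ => t ^ q) 0 :=
          Real.continuousAt_rpow_const _ q (Or.inr hq0.le)
        have hx2n : Tendsto (fun n => ‖u n x - uinf x‖) atTop (nhds (0:ℝ)) := by
          simpa using hx2.norm
        have hn2 : Tendsto (fun n => ‖u n x - uinf x‖ ^ q) atTop (nhds 0) := by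
          have := hrpow0.tendsto.comp hx2n
          simpa [Function.comp_def, Real.zero_rpow hq0.ne'] using this
        have hg0 : Tendsto (fun n => |‖u n x‖ ^ q - ‖u n x - uinf x‖ ^ q
            - ‖uinf x‖ ^ q|) atTop (nhds 0) := by
          have := ((hn1.sub hn2).sub (tendsto_const_nhds (x := ‖uinf x‖ ^ q))).abs
          simpa using this
        exact squeeze_zero (fun n => hW_nonneg n x)
          (fun n => max_le (sub_le_self _ (by positivity)) (abs_nonneg _)) hg0)
    simpa using hdc
  have hεM : ε * M ≤ δ / 2 := by
    rw [hεdef, div_mul_eq_mul_div, div_le_div_iff₀ (by nlinarith) (by norm_num)]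
    nlinarith
  obtain ⟨N, hN⟩ := Metric.tendsto_atTop.1 hWtendsto (δ / 2) (by linarith)
  refine ⟨N, fun n hn => ?_⟩
  have hWn := hN n hn
  rw [Real.dist_eq, sub_zero] at hWn
  have hWn' : (∫ x, W n x) < δ / 2 := lt_of_le_of_lt (le_abs_self _) hWn
  have hint1 : (∫ x, |‖u n x‖ ^ q - ‖u n x - uinf x‖ ^ q - ‖uinf x‖ ^ q|)
      ≤ ∫ x, (W n x + ε * ‖u n x - uinf x‖ ^ q) := by
    apply integral_mono (hg_int n) ((hW_int n).add ((hI2 n).const_mul ε))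
    intro x
    have h1 : |‖u n x‖ ^ q - ‖u n x - uinf x‖ ^ q - ‖uinf x‖ ^ q|
        - ε * ‖u n x - uinf x‖ ^ q ≤ W n x := le_max_left _ _
    simp only [Pi.add_apply]
    linarith
  have hint2 : (∫ x, (W n x + ε * ‖u n x - uinf x‖ ^ q))
      = (∫ x, W n x) + ε * ∫ x, ‖u n x - uinf x‖ ^ q := by
    rw [integral_add (hW_int n) ((hI2 n).const_mul ε), integral_const_mul]
  rw [Real.dist_eq, sub_zero, abs_of_nonneg (integral_nonneg fun x => abs_nonneg _)]
  have hεMn : ε * (∫ x, ‖u n x - uinf x‖ ^ q) ≤ ε * M :=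
    mul_le_mul_of_nonneg_left (hM n) hε.le
  calc (∫ x, |‖u n x‖ ^ q - ‖u n x - uinf x‖ ^ q - ‖uinf x‖ ^ q|)
      ≤ (∫ x, W n x) + ε * ∫ x, ‖u n x - uinf x‖ ^ q := by rw [← hint2]; exact hint1
    _ ≤ (∫ x, W n x) + ε * M := by linarith
    _ < δ / 2 + δ / 2 := by linarith
    _ = δ := by ring
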